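/- Let D = {λ ∈ ℝ³ : λ¹ > λ² > λ³ > 0}, and on D set σ = λ¹+λ²+λ³, g₁ = σ(λ¹−λ²)(λ¹−λ³), g₂ = σ(λ²−λ¹)(λ²−λ³), g₃ = σ(λ³−λ¹)(λ³−λ²), and ρ = σ^{3/2}(λ¹−λ²)(λ¹−λ³)(λ²−λ³). Let k, k₀, k₁ be real constants and let φ₁, φ₂, φ₃ : ℝ → ℝ be C² functions satisfying φᵢ''(x) + (k²x³ + k₁x + k₀)φᵢ(x) = 0. Then the function ψ(λ) = σ^{−1/4}·φ₁(λ¹)φ₂(λ²)φ₃(λ³) satisfies ρ⁻¹ ∑_{i=1}^{3} ∂ᵢ((ρ/gᵢ) ∂ᵢψ) + k²ψ = 0 on D. -/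

import Mathlib

/-- The partial derivative of `f : ℝ³ → ℝ` in the `i`-th coordinate direction,
taken as a line (directional) derivative. -/
noncomputable def pd (i : Fin 3) (f : (Fin 3 → ℝ) → ℝ) (x : Fin 3 → ℝ) : ℝ :=
  lineDeriv ℝ f x (Pi.single i 1)

open Real Filter


lemma pd_eq (i : Fin 3) (f : (Fin 3 → ℝ) → ℝ) (l : Fin 3 → ℝ) :
    pd i f l = deriv (fun x => f (Function.update l i x)) (l i) := by
  unfold pd lineDeriv
  have h : (fun t : ℝ => f (l + t • (Pi.single i 1 : Fin 3 → ℝ)))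
      = fun t => (fun x => f (Function.update l i x)) (l i + t) := by
    funext t; congr 1; funext j
    by_cases h : j = i
    · subst h; simp
    · simp [Function.update_of_ne h, Pi.single_eq_of_ne h]
  rw [h]
  simpa using deriv_comp_const_add (fun x => f (Function.update l i x)) (l i) 0

lemma hasDerivAt_rpow_shift (m p : ℝ) {x : ℝ} (hx : 0 < x + m) :
    HasDerivAt (fun y => (y + m) ^ p) (p * (x + m) ^ (p - 1)) x := by
  have h1 : HasDerivAt (fun y : ℝ => y + m) 1 x := (hasDerivAt_id x).add_const m
  have h2 := (Real.hasDerivAt_rpow_const (x := x + m) (p := p) (Or.inl hx.ne')).comp x h1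
  simpa [Function.comp_def] using h2

lemma key1d (k k0 k1 : ℝ) (φ : ℝ → ℝ) (hφ : ContDiff ℝ 2 φ)
    (hode : ∀ x, deriv (deriv φ) x + (k ^ 2 * x ^ 3 + k1 * x + k0) * φ x = 0)
    (m : ℝ) {x : ℝ} (hx : 0 < x + m) :
    HasDerivAt (fun y => (y + m) ^ ((1:ℝ)/2) * deriv (fun z => (z + m) ^ (-(1:ℝ)/4) * φ z) y)
      ((3/16) * (x + m) ^ (-(7:ℝ)/4) * φ x
        - (x + m) ^ ((1:ℝ)/4) * (k ^ 2 * x ^ 3 + k1 * x + k0) * φ x) x := by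
  have hdφ : Differentiable ℝ φ := hφ.differentiable (by norm_num)
  have hφ1 : ContDiff ℝ 1 (deriv φ) := by
    have := (contDiff_succ_iff_deriv (n := 1)).mp (by norm_num at hφ ⊢; exact hφ)
    exact this.2.2
  have hdφ' : Differentiable ℝ (deriv φ) := hφ1.differentiable (by norm_num)
  have hu : ∀ y : ℝ, 0 < y + m →
      HasDerivAt (fun z => (z + m) ^ (-(1:ℝ)/4) * φ z)
        ((-(1:ℝ)/4) * (y + m) ^ (-(1:ℝ)/4 - 1) * φ y + (y + m) ^ (-(1:ℝ)/4) * deriv φ y) y :=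
    fun y hy => (hasDerivAt_rpow_shift m _ hy).mul (hdφ y).hasDerivAt
  set G : ℝ → ℝ := fun y =>
    (-(1:ℝ)/4) * (y + m) ^ (-(3:ℝ)/4) * φ y + (y + m) ^ ((1:ℝ)/4) * deriv φ y with hGdef
  have heq : (fun y => (y + m) ^ ((1:ℝ)/2) * deriv (fun z => (z + m) ^ (-(1:ℝ)/4) * φ z) y)
      =ᶠ[nhds x] G := by
    filter_upwards [Ioi_mem_nhds (show -m < x by linarith)] with y hy
    have hy' : 0 < y + m := by simp only [Set.mem_Ioi] at hy; linarith
    rw [(hu y hy').deriv, hGdef]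
    have e1 : (y + m) ^ ((1:ℝ)/2) * (y + m) ^ (-(1:ℝ)/4 - 1) = (y + m) ^ (-(3:ℝ)/4) := by
      rw [← Real.rpow_add hy']; norm_num
    have e2 : (y + m) ^ ((1:ℝ)/2) * (y + m) ^ (-(1:ℝ)/4) = (y + m) ^ ((1:ℝ)/4) := by
      rw [← Real.rpow_add hy']; norm_num
    linear_combination (φ y * (-(1:ℝ)/4)) * e1 + deriv φ y * e2
  have t1 : HasDerivAt (fun y : ℝ => (-(1:ℝ)/4) * (y + m) ^ (-(3:ℝ)/4) * φ y)
      (((-(1:ℝ)/4) * ((-(3:ℝ)/4) * (x + m) ^ (-(3:ℝ)/4 - 1))) * φ x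
        + ((-(1:ℝ)/4) * (x + m) ^ (-(3:ℝ)/4)) * deriv φ x) x := by
    have := ((hasDerivAt_rpow_shift m (-(3:ℝ)/4) hx).const_mul (-(1:ℝ)/4)).mul (hdφ x).hasDerivAt
    simpa [mul_assoc, Pi.mul_def] using this
  have t2 : HasDerivAt (fun y : ℝ => (y + m) ^ ((1:ℝ)/4) * deriv φ y)
      (((1:ℝ)/4 * (x + m) ^ ((1:ℝ)/4 - 1)) * deriv φ x
        + (x + m) ^ ((1:ℝ)/4) * deriv (deriv φ) x) x :=
    (hasDerivAt_rpow_shift m ((1:ℝ)/4) hx).mul (hdφ' x).hasDerivAt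
  have hG : HasDerivAt G _ x := t1.add t2
  refine (hG.congr_of_eventuallyEq heq).congr_deriv ?_
  have hφ'' : deriv (deriv φ) x = -((k ^ 2 * x ^ 3 + k1 * x + k0) * φ x) := by
    linarith [hode x]
  rw [hφ'', show (-(3:ℝ)/4 - 1) = -(7:ℝ)/4 by norm_num,
    show ((1:ℝ)/4 - 1) = -(3:ℝ)/4 by norm_num]
  ring

lemma main_key (k k0 k1 : ℝ) (φ : ℝ → ℝ) (hφ : ContDiff ℝ 2 φ)
    (hode : ∀ x, deriv (deriv φ) x + (k ^ 2 * x ^ 3 + k1 * x + k0) * φ x = 0)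
    (m c C : ℝ) (F : ℝ → ℝ) {x : ℝ} (hx : 0 < x + m)
    (hF : F =ᶠ[nhds x] fun y =>
      (c * (y + m) ^ ((1:ℝ)/2)) * (C * deriv (fun z => (z + m) ^ (-(1:ℝ)/4) * φ z) y)) :
    deriv F x = c * C * ((3/16) * (x + m) ^ (-(7:ℝ)/4) * φ x
      - (x + m) ^ ((1:ℝ)/4) * (k ^ 2 * x ^ 3 + k1 * x + k0) * φ x) := by
  have h1 := key1d k k0 k1 φ hφ hode m hx
  have hfun : (fun y => (c * (y + m) ^ ((1:ℝ)/2))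
        * (C * deriv (fun z => (z + m) ^ (-(1:ℝ)/4) * φ z) y))
      = fun y => (c * C)
        * ((y + m) ^ ((1:ℝ)/2) * deriv (fun z => (z + m) ^ (-(1:ℝ)/4) * φ z) y) := by
    funext y; ring
  rw [hF.deriv_eq, hfun]
  exact (h1.const_mul (c * C)).deriv


/-- **The Kalnins–Miller example.** On `D = {λ¹ > λ² > λ³ > 0}`, with
`σ = λ¹+λ²+λ³`, `gᵢ = σ·∏_{j≠i}(λⁱ-λʲ)`, and volume density
`ρ = σ^{3/2}(λ¹-λ²)(λ¹-λ³)(λ²-λ³)`, every choice of `C²` solutions of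
`φᵢ'' + (k²x³ + k₁x + k₀)φᵢ = 0` yields a solution `ψ = σ^{-1/4}·φ₁φ₂φ₃` of the
Helmholtz equation `ρ⁻¹∑ᵢ∂ᵢ((ρ/gᵢ)∂ᵢψ) + k²ψ = 0` on `D`. -/
theorem kalnins_miller_R_separability
    (D : Set (Fin 3 → ℝ)) (hD : D = {l | 0 < l 2 ∧ l 2 < l 1 ∧ l 1 < l 0})
    (σ g1 g2 g3 ρ : (Fin 3 → ℝ) → ℝ)
    (hσ : ∀ l, σ l = l 0 + l 1 + l 2)
    (hg1 : ∀ l, g1 l = σ l * (l 0 - l 1) * (l 0 - l 2))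
    (hg2 : ∀ l, g2 l = σ l * (l 1 - l 0) * (l 1 - l 2))
    (hg3 : ∀ l, g3 l = σ l * (l 2 - l 0) * (l 2 - l 1))
    (hρ : ∀ l, ρ l = σ l ^ ((3 : ℝ) / 2) * (l 0 - l 1) * (l 0 - l 2) * (l 1 - l 2))
    (k k0 k1 : ℝ)
    (φ : Fin 3 → ℝ → ℝ) (hφ : ∀ i, ContDiff ℝ 2 (φ i))
    (hode : ∀ i, ∀ x : ℝ,
      deriv (deriv (φ i)) x + (k ^ 2 * x ^ 3 + k1 * x + k0) * φ i x = 0)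
    (ψ : (Fin 3 → ℝ) → ℝ)
    (hψ : ∀ l, ψ l = σ l ^ (-(1 : ℝ) / 4) * (φ 0 (l 0) * φ 1 (l 1) * φ 2 (l 2))) :
    ∀ l ∈ D,
      (ρ l)⁻¹ * (pd 0 (fun w => ρ w / g1 w * pd 0 ψ w) l
          + pd 1 (fun w => ρ w / g2 w * pd 1 ψ w) l
          + pd 2 (fun w => ρ w / g3 w * pd 2 ψ w) l)
        + k ^ 2 * ψ l = 0 := by
  intro l hl
  rw [hD] at hl
  obtain ⟨h2, h21, h10⟩ := hl
  have h1 : 0 < l 1 := lt_trans h2 h21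
  have h0 : 0 < l 0 := lt_trans h1 h10
  have hS : 0 < l 0 + l 1 + l 2 := by linarith
  -- key for coordinate 0
  have key0 : pd 0 (fun w => ρ w / g1 w * pd 0 ψ w) l
      = (l 1 - l 2) * (φ 1 (l 1) * φ 2 (l 2)) *
        ((3/16) * (l 0 + (l 1 + l 2)) ^ (-(7:ℝ)/4) * φ 0 (l 0)
          - (l 0 + (l 1 + l 2)) ^ ((1:ℝ)/4)
            * (k ^ 2 * (l 0) ^ 3 + k1 * l 0 + k0) * φ 0 (l 0)) := by
    rw [pd_eq]
    refine main_key k k0 k1 (φ 0) (hφ 0) (hode 0) (l 1 + l 2) _ _ _ (by linarith) ?_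
    have hΨ : (fun y => ψ (Function.update l 0 y))
        = fun y => (φ 1 (l 1) * φ 2 (l 2)) * ((y + (l 1 + l 2)) ^ (-(1:ℝ)/4) * φ 0 y) := by
      funext y
      rw [hψ, hσ, Function.update_self,
        Function.update_of_ne (show (1:Fin 3) ≠ 0 by decide),
        Function.update_of_ne (show (2:Fin 3) ≠ 0 by decide),
        show y + l 1 + l 2 = y + (l 1 + l 2) by ring]
      ring
    filter_upwards [Ioi_mem_nhds h10] with x hx
    have hx1 : l 1 < x := hx
    have hsx : 0 < x + (l 1 + l 2) := by linarith
    have e0 : Function.update l 0 x 0 = x := Function.update_self _ _ _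
    have e1 : Function.update l 0 x 1 = l 1 :=
      Function.update_of_ne (by decide) _ _
    have e2 : Function.update l 0 x 2 = l 2 :=
      Function.update_of_ne (by decide) _ _
    have hpd : pd 0 ψ (Function.update l 0 x)
        = (φ 1 (l 1) * φ 2 (l 2))
          * deriv (fun z => (z + (l 1 + l 2)) ^ (-(1:ℝ)/4) * φ 0 z) x := by
      rw [pd_eq]
      have hu : (fun y => ψ (Function.update (Function.update l 0 x) 0 y))
          = fun y => ψ (Function.update l 0 y) := by
        funext y; rw [Function.update_idem]
      rw [hu, e0, hΨ, deriv_const_mul_field]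
    have hratio : ρ (Function.update l 0 x) / g1 (Function.update l 0 x)
        = (l 1 - l 2) * (x + (l 1 + l 2)) ^ ((1:ℝ)/2) := by
      rw [hρ, hg1, hσ, e0, e1, e2]
      have hs' : (0:ℝ) < x + l 1 + l 2 := by linarith
      have h32 : (x + l 1 + l 2) ^ ((3:ℝ)/2)
          = (x + l 1 + l 2) * (x + l 1 + l 2) ^ ((1:ℝ)/2) := by
        rw [show (3:ℝ)/2 = 1 + 1/2 by norm_num, Real.rpow_add hs', Real.rpow_one]
      have hxb : x - l 1 ≠ 0 := by intro h; apply absurd hx1; linarith [sub_eq_zero.mp h]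
      have hxc : x - l 2 ≠ 0 := by
        intro h; have := sub_eq_zero.mp h; linarith
      have hsne : x + l 1 + l 2 ≠ 0 := hs'.ne'
      rw [h32, show x + l 1 + l 2 = x + (l 1 + l 2) by ring] at *
      field_simp
    show ρ (Function.update l 0 x) / g1 (Function.update l 0 x) * pd 0 ψ (Function.update l 0 x)
      = _
    rw [hpd, hratio]
  -- key for coordinate 1
  have key1 : pd 1 (fun w => ρ w / g2 w * pd 1 ψ w) l
      = (-(l 0 - l 2)) * (φ 0 (l 0) * φ 2 (l 2)) *
        ((3/16) * (l 1 + (l 0 + l 2)) ^ (-(7:ℝ)/4) * φ 1 (l 1)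
          - (l 1 + (l 0 + l 2)) ^ ((1:ℝ)/4)
            * (k ^ 2 * (l 1) ^ 3 + k1 * l 1 + k0) * φ 1 (l 1)) := by
    rw [pd_eq]
    refine main_key k k0 k1 (φ 1) (hφ 1) (hode 1) (l 0 + l 2) _ _ _ (by linarith) ?_
    have hΨ : (fun y => ψ (Function.update l 1 y))
        = fun y => (φ 0 (l 0) * φ 2 (l 2)) * ((y + (l 0 + l 2)) ^ (-(1:ℝ)/4) * φ 1 y) := by
      funext y
      rw [hψ, hσ, Function.update_self,
        Function.update_of_ne (show (0:Fin 3) ≠ 1 by decide),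
        Function.update_of_ne (show (2:Fin 3) ≠ 1 by decide),
        show l 0 + y + l 2 = y + (l 0 + l 2) by ring]
      ring
    filter_upwards [Ioo_mem_nhds h21 h10] with x hx
    obtain ⟨hxl, hxr⟩ := hx
    have hsx : 0 < x + (l 0 + l 2) := by linarith
    have e0 : Function.update l 1 x 0 = l 0 := Function.update_of_ne (by decide) _ _
    have e1 : Function.update l 1 x 1 = x := Function.update_self _ _ _
    have e2 : Function.update l 1 x 2 = l 2 := Function.update_of_ne (by decide) _ _
    have hpd : pd 1 ψ (Function.update l 1 x)
        = (φ 0 (l 0) * φ 2 (l 2))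
          * deriv (fun z => (z + (l 0 + l 2)) ^ (-(1:ℝ)/4) * φ 1 z) x := by
      rw [pd_eq]
      have hu : (fun y => ψ (Function.update (Function.update l 1 x) 1 y))
          = fun y => ψ (Function.update l 1 y) := by
        funext y; rw [Function.update_idem]
      rw [hu, e1, hΨ, deriv_const_mul_field]
    have hratio : ρ (Function.update l 1 x) / g2 (Function.update l 1 x)
        = (-(l 0 - l 2)) * (x + (l 0 + l 2)) ^ ((1:ℝ)/2) := by
      rw [hρ, hg2, hσ, e0, e1, e2]
      have hs' : (0:ℝ) < l 0 + x + l 2 := by linarith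
      have h32 : (l 0 + x + l 2) ^ ((3:ℝ)/2)
          = (l 0 + x + l 2) * (l 0 + x + l 2) ^ ((1:ℝ)/2) := by
        rw [show (3:ℝ)/2 = 1 + 1/2 by norm_num, Real.rpow_add hs', Real.rpow_one]
      have hxb : x - l 0 ≠ 0 := sub_ne_zero.mpr (ne_of_lt hxr)
      have hxc : x - l 2 ≠ 0 := sub_ne_zero.mpr (ne_of_gt hxl)
      have hsne : l 0 + x + l 2 ≠ 0 := hs'.ne'
      rw [h32, show l 0 + x + l 2 = x + (l 0 + l 2) by ring] at *
      field_simp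
      ring
    show ρ (Function.update l 1 x) / g2 (Function.update l 1 x) * pd 1 ψ (Function.update l 1 x)
      = _
    rw [hpd, hratio]
  -- key for coordinate 2
  have key2 : pd 2 (fun w => ρ w / g3 w * pd 2 ψ w) l
      = (l 0 - l 1) * (φ 0 (l 0) * φ 1 (l 1)) *
        ((3/16) * (l 2 + (l 0 + l 1)) ^ (-(7:ℝ)/4) * φ 2 (l 2)
          - (l 2 + (l 0 + l 1)) ^ ((1:ℝ)/4)
            * (k ^ 2 * (l 2) ^ 3 + k1 * l 2 + k0) * φ 2 (l 2)) := by
    rw [pd_eq]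
    refine main_key k k0 k1 (φ 2) (hφ 2) (hode 2) (l 0 + l 1) _ _ _ (by linarith) ?_
    have hΨ : (fun y => ψ (Function.update l 2 y))
        = fun y => (φ 0 (l 0) * φ 1 (l 1)) * ((y + (l 0 + l 1)) ^ (-(1:ℝ)/4) * φ 2 y) := by
      funext y
      rw [hψ, hσ, Function.update_self,
        Function.update_of_ne (show (0:Fin 3) ≠ 2 by decide),
        Function.update_of_ne (show (1:Fin 3) ≠ 2 by decide),
        show l 0 + l 1 + y = y + (l 0 + l 1) by ring]
      ring
    filter_upwards [Ioo_mem_nhds h2 h21] with x hx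
    obtain ⟨hxl, hxr⟩ := hx
    have hsx : 0 < x + (l 0 + l 1) := by linarith
    have e0 : Function.update l 2 x 0 = l 0 := Function.update_of_ne (by decide) _ _
    have e1 : Function.update l 2 x 1 = l 1 := Function.update_of_ne (by decide) _ _
    have e2 : Function.update l 2 x 2 = x := Function.update_self _ _ _
    have hpd : pd 2 ψ (Function.update l 2 x)
        = (φ 0 (l 0) * φ 1 (l 1))
          * deriv (fun z => (z + (l 0 + l 1)) ^ (-(1:ℝ)/4) * φ 2 z) x := by
      rw [pd_eq]
      have hu : (fun y => ψ (Function.update (Function.update l 2 x) 2 y))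
          = fun y => ψ (Function.update l 2 y) := by
        funext y; rw [Function.update_idem]
      rw [hu, e2, hΨ, deriv_const_mul_field]
    have hratio : ρ (Function.update l 2 x) / g3 (Function.update l 2 x)
        = (l 0 - l 1) * (x + (l 0 + l 1)) ^ ((1:ℝ)/2) := by
      rw [hρ, hg3, hσ, e0, e1, e2]
      have hs' : (0:ℝ) < l 0 + l 1 + x := by linarith
      have h32 : (l 0 + l 1 + x) ^ ((3:ℝ)/2)
          = (l 0 + l 1 + x) * (l 0 + l 1 + x) ^ ((1:ℝ)/2) := by
        rw [show (3:ℝ)/2 = 1 + 1/2 by norm_num, Real.rpow_add hs', Real.rpow_one]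
      have hxb : x - l 0 ≠ 0 := sub_ne_zero.mpr (by linarith)
      have hxc : x - l 1 ≠ 0 := sub_ne_zero.mpr (ne_of_lt hxr)
      have hsne : l 0 + l 1 + x ≠ 0 := hs'.ne'
      rw [h32, show l 0 + l 1 + x = x + (l 0 + l 1) by ring] at *
      field_simp
      ring
    show ρ (Function.update l 2 x) / g3 (Function.update l 2 x) * pd 2 ψ (Function.update l 2 x)
      = _
    rw [hpd, hratio]
  -- final assembly
  rw [key0, key1, key2, hψ, hρ, hσ,
    show l 0 + (l 1 + l 2) = l 0 + l 1 + l 2 by ring,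
    show l 1 + (l 0 + l 2) = l 0 + l 1 + l 2 by ring,
    show l 2 + (l 0 + l 1) = l 0 + l 1 + l 2 by ring]
  set S := l 0 + l 1 + l 2 with hSdef
  have E1 : S ^ ((3:ℝ)/2) * S ^ (-(1:ℝ)/4) = S ^ ((1:ℝ)/4) * S := by
    calc S ^ ((3:ℝ)/2) * S ^ (-(1:ℝ)/4) = S ^ ((3:ℝ)/2 + -(1:ℝ)/4) :=
          (Real.rpow_add hS _ _).symm
      _ = S ^ ((1:ℝ)/4 + 1) := by norm_num
      _ = S ^ ((1:ℝ)/4) * S ^ (1:ℝ) := Real.rpow_add hS _ _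
      _ = S ^ ((1:ℝ)/4) * S := by rw [Real.rpow_one]
  have hXne : S ^ ((3:ℝ)/2) ≠ 0 := (Real.rpow_pos_of_pos hS _).ne'
  have hab : l 0 - l 1 ≠ 0 := sub_ne_zero.mpr (ne_of_gt h10)
  have hac : l 0 - l 2 ≠ 0 := sub_ne_zero.mpr (by linarith)
  have hbc : l 1 - l 2 ≠ 0 := sub_ne_zero.mpr (ne_of_gt h21)
  field_simp
  simp only [neg_div] at E1 ⊢
  linear_combination (16 * k ^ 2 * (φ 0 (l 0) * φ 1 (l 1) * φ 2 (l 2)) * (l 0 - l 1) * (l 0 - l 2) * (l 1 - l 2)) * E1 + (16 * k ^ 2 * (φ 0 (l 0) * φ 1 (l 1) * φ 2 (l 2)) * (l 0 - l 1) * (l 0 - l 2) * (l 1 - l 2) * S ^ ((1:ℝ)/4)) * hSdef
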